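/- Let G be a symmetric positive definite n×n real matrix, σ > 0, and Σ = σ²·G⁻¹. Let H₁, H₂ be symmetric positive semidefinite n×n real matrices with rank(H₁) ≤ rank(H₂). If L₁ and L₂ are real numbers such that t ↦ (1/4)·Tr(Σ·G·(I − exp(−2t·(G·H₁)))) converges to L₁ and t ↦ (1/4)·Tr(Σ·G·(I − exp(−2t·(G·H₂)))) converges to L₂ as t → ∞, then L₁ ≤ L₂. (Proposition 4 in the isotropic case Σ·G = σ²·I: a larger Hessian rank gives a larger asymptotic expected loss.) -/

import Mathlib

open Matrix Filter

theorem trace_exp_tendsto (n : ℕ) (M : Matrix (Fin n) (Fin n) ℝ) (hM : M.PosSemidef) :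
    Tendsto (fun t : ℝ => Matrix.trace (NormedSpace.exp ((-(2 * t)) • M)))
      atTop (nhds ((n : ℝ) - M.rank)) := by
  classical
  have hH := hM.1
  set U : Matrix (Fin n) (Fin n) ℝ := (hH.eigenvectorUnitary : Matrix (Fin n) (Fin n) ℝ) with hU
  set μ : Fin n → ℝ := hH.eigenvalues with hμ
  have hspec : M = U * Matrix.diagonal μ * star U := by
    have := hH.spectral_theorem
    simpa [RCLike.ofReal_real_eq_id] using this
  have hUunit : IsUnit U := ⟨Unitary.toUnits hH.eigenvectorUnitary, rfl⟩
  have hUinv : U⁻¹ = star U := by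
    apply Matrix.inv_eq_left_inv
    exact (Unitary.mem_iff.mp hH.eigenvectorUnitary.2).1
  -- rewrite trace
  have key : ∀ t : ℝ, Matrix.trace (NormedSpace.exp ((-(2 * t)) • M))
      = ∑ j, Real.exp ((-(2 * t)) * μ j) := by
    intro t
    have h1 : (-(2 * t)) • M = U * Matrix.diagonal (fun j => (-(2 * t)) * μ j) * U⁻¹ := by
      rw [hspec, hUinv]
      have hd : Matrix.diagonal (fun j => (-(2 * t)) * μ j) = (-(2*t)) • Matrix.diagonal μ := by
        rw [← Matrix.diagonal_smul]
        congr 1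
      rw [hd, mul_smul_comm, smul_mul_assoc]
    rw [h1, Matrix.exp_conj U _ hUunit, Matrix.trace_mul_comm, ← Matrix.mul_assoc,
      Matrix.nonsing_inv_mul _ (Matrix.isUnit_iff_isUnit_det U |>.mp hUunit), Matrix.one_mul,
      Matrix.exp_diagonal, Matrix.trace_diagonal]
    congr 1
    ext j
    rw [Pi.exp_def]
    exact (congrFun Real.exp_eq_exp_ℝ _).symm
  simp only [key]
  -- limit of the sum
  have hlim : Tendsto (fun t : ℝ => ∑ j, Real.exp ((-(2 * t)) * μ j)) atTop
      (nhds (∑ j, if μ j = 0 then (1:ℝ) else 0)) := by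
    apply tendsto_finset_sum
    intro j _
    by_cases hj : μ j = 0
    · simpa [hj] using tendsto_const_nhds
    · have hjpos : 0 < μ j := lt_of_le_of_ne (hM.eigenvalues_nonneg j) (Ne.symm hj)
      simp only [hj, if_neg hj, if_false]
      have : Tendsto (fun t : ℝ => (-(2 * t)) * μ j) atTop atBot := by
        have := (tendsto_id (α := ℝ)).const_mul_atTop (by positivity : (0:ℝ) < 2 * μ j)
        have h2 : (fun t : ℝ => (-(2 * t)) * μ j) = fun t : ℝ => -((2 * μ j) * t) := by
          ext t; ring
        rw [h2]
        exact tendsto_neg_atBot_iff.mpr (by simpa using this)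
      exact Real.tendsto_exp_atBot.comp this
  convert hlim using 2
  -- count: n - rank = number of zero eigenvalues
  rw [hH.rank_eq_card_non_zero_eigs]
  have h1 : (∑ j, if μ j = 0 then (1:ℝ) else 0)
      = ((Finset.univ.filter (fun j => μ j = 0)).card : ℝ) := by
    simp [Finset.sum_boole]
  have h2 : Fintype.card {i // hH.eigenvalues i ≠ 0}
      = (Finset.univ.filter (fun j => ¬ (μ j = 0))).card := Fintype.card_subtype _
  have h3 : (Finset.univ.filter (fun j => μ j = 0)).card
      + (Finset.univ.filter (fun j => ¬ (μ j = 0))).card = n := by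
    rw [Finset.card_filter_add_card_filter_not]
    simp
  rw [h1, h2]
  have := congrArg (fun k : ℕ => (k : ℝ)) h3
  push_cast at this ⊢
  linarith

open scoped MatrixOrder in
theorem loss_limit_eq (n : ℕ) (G Sg H : Matrix (Fin n) (Fin n) ℝ) (hG : G.PosDef)
    (σ : ℝ) (hσ : 0 < σ) (hSg : Sg = σ ^ 2 • G⁻¹) (hH : H.PosSemidef) (L : ℝ)
    (hL : Tendsto
      (fun t : ℝ =>
        (1 / 4) * Matrix.trace (Sg * G * (1 - NormedSpace.exp ((-(2 * t)) • (G * H)))))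
      atTop (nhds L)) :
    L = σ ^ 2 / 4 * H.rank := by
  classical
  set S := CFC.sqrt G with hSdef
  have hS2 : S * S = G := CFC.sqrt_mul_sqrt_self G hG.posSemidef.nonneg
  have hSherm : S.IsHermitian := (CFC.sqrt_nonneg G).posSemidef.1
  have hGdet : IsUnit G.det := isUnit_iff_ne_zero.mpr hG.det_pos.ne'
  have hSdet : IsUnit S.det := by
    apply isUnit_iff_ne_zero.mpr
    intro h
    have : G.det = 0 := by rw [← hS2, Matrix.det_mul, h, mul_zero]
    exact hG.det_pos.ne' this
  set M := S * H * S with hMdef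
  have hMpsd : M.PosSemidef := by
    have := hH.mul_mul_conjTranspose_same S
    rwa [hSherm.eq] at this
  have hMrank : M.rank = H.rank := by
    rw [hMdef, Matrix.rank_mul_eq_left_of_isUnit_det S (S * H) hSdet,
      Matrix.rank_mul_eq_right_of_isUnit_det S H hSdet]
  have hconj : G * H = S * M * S⁻¹ := by
    rw [hMdef, ← Matrix.mul_assoc, ← Matrix.mul_assoc, hS2, Matrix.mul_assoc (G * H),
      Matrix.mul_nonsing_inv _ hSdet, Matrix.mul_one]
  have htr : ∀ t : ℝ, Matrix.trace (NormedSpace.exp ((-(2 * t)) • (G * H)))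
      = Matrix.trace (NormedSpace.exp ((-(2 * t)) • M)) := by
    intro t
    have h1 : (-(2 * t)) • (G * H) = S * ((-(2 * t)) • M) * S⁻¹ := by
      rw [hconj, mul_smul_comm, smul_mul_assoc]
    rw [h1, Matrix.exp_conj S _ (Matrix.isUnit_iff_isUnit_det S |>.mpr hSdet),
      Matrix.trace_mul_cycle, Matrix.nonsing_inv_mul _ hSdet, Matrix.one_mul]
  -- rewrite Sg * G
  have hSgG : Sg * G = σ ^ 2 • (1 : Matrix (Fin n) (Fin n) ℝ) := by
    rw [hSg, smul_mul_assoc, Matrix.nonsing_inv_mul _ hGdet]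
  have hfun : ∀ t : ℝ,
      (1 / 4) * Matrix.trace (Sg * G * (1 - NormedSpace.exp ((-(2 * t)) • (G * H))))
      = σ ^ 2 / 4 * ((n : ℝ) - Matrix.trace (NormedSpace.exp ((-(2 * t)) • M))) := by
    intro t
    rw [hSgG, smul_mul_assoc, Matrix.one_mul, Matrix.trace_smul, Matrix.trace_sub,
      Matrix.trace_one, htr t]
    simp only [smul_eq_mul, Fintype.card_fin]
    ring
  have hlim2 : Tendsto
      (fun t : ℝ =>
        (1 / 4) * Matrix.trace (Sg * G * (1 - NormedSpace.exp ((-(2 * t)) • (G * H)))))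
      atTop (nhds (σ ^ 2 / 4 * ((n : ℝ) - ((n : ℝ) - M.rank)))) := by
    simp only [hfun]
    exact (tendsto_const_nhds.sub (trace_exp_tendsto n M hMpsd)).const_mul _
  have := tendsto_nhds_unique hL hlim2
  rw [this, hMrank]
  ring

/-- Proposition 4 (isotropic case `Σ·G = σ²·I`): a larger Hessian rank gives a larger
asymptotic expected loss. -/
theorem rank_mono_expected_loss (n : ℕ) (hn : 1 ≤ n)
    (G Sg H₁ H₂ : Matrix (Fin n) (Fin n) ℝ) (hG : G.PosDef)
    (σ : ℝ) (hσ : 0 < σ) (hSg : Sg = σ ^ 2 • G⁻¹)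
    (hH₁ : H₁.PosSemidef) (hH₂ : H₂.PosSemidef) (hrank : H₁.rank ≤ H₂.rank)
    (L₁ L₂ : ℝ)
    (hL₁ : Tendsto
      (fun t : ℝ =>
        (1 / 4) * Matrix.trace (Sg * G * (1 - NormedSpace.exp ((-(2 * t)) • (G * H₁)))))
      atTop (nhds L₁))
    (hL₂ : Tendsto
      (fun t : ℝ =>
        (1 / 4) * Matrix.trace (Sg * G * (1 - NormedSpace.exp ((-(2 * t)) • (G * H₂)))))
      atTop (nhds L₂)) :
    L₁ ≤ L₂ := by
  have e1 := loss_limit_eq n G Sg H₁ hG σ hσ hSg hH₁ L₁ hL₁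
  have e2 := loss_limit_eq n G Sg H₂ hG σ hσ hSg hH₂ L₂ hL₂
  rw [e1, e2]
  have hσ2 : 0 ≤ σ ^ 2 / 4 := by positivity
  exact mul_le_mul_of_nonneg_left (Nat.cast_le.mpr hrank) hσ2
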